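/- In the net setting for distance-regular graphs with d → ∞, suppose that for every i ≥ 1 the limits ω_i = lim ω̄_i and α_i = lim ᾱ_i exist and ω_i > 0. Then for every i ≥ 0 the limit γ_i = lim γ̄_i = lim t^i √(k_i) exists as well. -/

import Mathlib

open Matrix Filter

/-- A (bundled) distance-regular graph: a finite connected simple graph of diameter `d`
with intersection numbers `a i`, `b i`, `c i` for `0 ≤ i ≤ d`; `b 0` is the valency `k`. -/
structure DRG where
  X : Type
  fin : Fintype X
  G : SimpleGraph X
  d : ℕ
  a : ℕ → ℕ
  b : ℕ → ℕ
  c : ℕ → ℕ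
  conn : G.Connected
  dist_le : ∀ x y : X, G.dist x y ≤ d
  dist_eq : ∃ x y : X, G.dist x y = d
  bd : b d = 0
  c0 : c 0 = 0
  count_c : ∀ i ≤ d, ∀ x y : X, G.dist x y = i →
      {z : X | G.Adj y z ∧ G.dist x z = i - 1}.ncard = c i
  count_a : ∀ i ≤ d, ∀ x y : X, G.dist x y = i →
      {z : X | G.Adj y z ∧ G.dist x z = i}.ncard = a i
  count_b : ∀ i ≤ d, ∀ x y : X, G.dist x y = i →
      {z : X | G.Adj y z ∧ G.dist x z = i + 1}.ncard = b i

attribute [instance] DRG.fin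

noncomputable instance (Γ : DRG) : DecidableEq Γ.X := Classical.decEq _

noncomputable instance (Γ : DRG) : DecidableRel Γ.G.Adj := fun _ _ => Classical.dec _

namespace DRG

variable (Γ : DRG)

/-- The `i`-th distance matrix (over `ℂ`). -/
noncomputable def Amat (i : ℕ) : Matrix Γ.X Γ.X ℂ :=
  Matrix.of fun x y => if Γ.G.dist x y = i then 1 else 0

/-- The adjacency algebra `A(Γ) = span_ℂ {A_0, …, A_d}`. -/
noncomputable def adjAlg : Submodule ℂ (Matrix Γ.X Γ.X ℂ) :=
  Submodule.span ℂ {M | ∃ i ≤ Γ.d, M = Γ.Amat i}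

/-- The matrix `K_t = (t^{∂(x,y)})_{x,y}` (over `ℝ`). -/
noncomputable def Kmat (t : ℝ) : Matrix Γ.X Γ.X ℝ :=
  Matrix.of fun x y => t ^ Γ.G.dist x y

/-- `t ∈ π(Γ)`, i.e. `K_t` is positive semidefinite. -/
def piMem (t : ℝ) : Prop := (Γ.Kmat t).PosSemidef

/-- The Gibbs functional `φ_t(B) = ∑_x t^{∂(x,o)} B_{x,o}` with base vertex `o`. -/
noncomputable def gibbs (t : ℝ) (o : Γ.X) (B : Matrix Γ.X Γ.X ℂ) : ℂ :=
  ∑ x : Γ.X, (t : ℂ) ^ Γ.G.dist x o * B x o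

end DRG

section Net

variable {Λ : Type*} [Preorder Λ] [IsDirected Λ (· ≤ ·)] [Nonempty Λ]

/-- The variance `Σ_t²(A) = k(1−t)(1+t+t·a₁)` as a function of the net index. -/
noncomputable def sig2 (Γ : Λ → DRG) (t : Λ → ℝ) (l : Λ) : ℝ :=
  ((Γ l).b 0 : ℝ) * (1 - t l) * (1 + t l + t l * ((Γ l).a 1 : ℝ))

/-- `ω̄_i = c_i b_{i−1} / Σ_t²(A)`. -/
noncomputable def omegaBar (Γ : Λ → DRG) (t : Λ → ℝ) (i : ℕ) (l : Λ) : ℝ :=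
  (((Γ l).c i : ℝ) * ((Γ l).b (i - 1) : ℝ)) / sig2 Γ t l

/-- `ᾱ_i = (a_{i−1} − t·k) / Σ_t(A)`. -/
noncomputable def alphaBar (Γ : Λ → DRG) (t : Λ → ℝ) (i : ℕ) (l : Λ) : ℝ :=
  (((Γ l).a (i - 1) : ℝ) - t l * ((Γ l).b 0 : ℝ)) / Real.sqrt (sig2 Γ t l)

/-- `k_i = (b₀⋯b_{i−1})/(c₁⋯c_i)` as a real number. -/
noncomputable def kiProd (Γ : Λ → DRG) (i : ℕ) (l : Λ) : ℝ :=
  (∏ h ∈ Finset.range i, ((Γ l).b h : ℝ)) / (∏ h ∈ Finset.range i, ((Γ l).c (h + 1) : ℝ))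

/-- `γ̄_i = t^i √(k_i)`. -/
noncomputable def gammaBar (Γ : Λ → DRG) (t : Λ → ℝ) (i : ℕ) (l : Λ) : ℝ :=
  t l ^ i * Real.sqrt (kiProd Γ i l)

/-- Assumption (DR): for every `i ≥ 1` the limits `ω_i = lim ω̄_i` and `α_i = lim ᾱ_i`
exist (with prescribed values `ω i`, `αl i`) and `ω_i > 0`. -/
def AssumptionDR (Γ : Λ → DRG) (t : Λ → ℝ) (ω αl : ℕ → ℝ) : Prop :=
  ∀ i : ℕ, 1 ≤ i → 0 < ω i ∧ Tendsto (omegaBar Γ t i) atTop (nhds (ω i)) ∧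
    Tendsto (alphaBar Γ t i) atTop (nhds (αl i))

end Net

/- ======================= Auxiliary material ======================= -/

namespace SimpleGraph
variable {V : Type*} {G : SimpleGraph V}

lemma walk_dist_getVert_le (hc : G.Connected) : ∀ {u v : V} (p : G.Walk u v) (i : ℕ),
    G.dist u (p.getVert i) ≤ i := by
  intro u v p
  induction p with
  | nil => intro i; simp [Walk.getVert, dist_self]
  | cons h q ih =>
    intro i
    cases i with
    | zero => simp [Walk.getVert_zero, dist_self]
    | succ n =>
      calc G.dist _ _ ≤ G.dist _ _ + G.dist _ _ := hc.dist_triangle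
        _ ≤ 1 + n := by
            have : G.dist _ _ = 1 := dist_eq_one_iff_adj.2 h
            rw [Walk.getVert_cons_succ]
            exact Nat.add_le_add (le_of_eq this) (ih n)
        _ = n + 1 := Nat.add_comm _ _

lemma walk_dist_getVert_ge (hc : G.Connected) : ∀ {u v : V} (p : G.Walk u v) (i : ℕ),
    G.dist (p.getVert i) v ≤ p.length - i := by
  intro u v p
  induction p with
  | nil => intro i; simp [Walk.getVert, dist_self]
  | cons h q ih =>
    intro i
    cases i with
    | zero =>
      simp only [Walk.getVert_zero, Walk.length_cons, Nat.sub_zero]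
      calc G.dist _ _ ≤ G.dist _ _ + G.dist _ _ := hc.dist_triangle
        _ ≤ 1 + q.length := by
            have h1 : G.dist _ _ = 1 := dist_eq_one_iff_adj.2 h
            have h2 := ih 0
            simp only [Walk.getVert_zero, Nat.sub_zero] at h2
            exact Nat.add_le_add (le_of_eq h1) h2
        _ = q.length + 1 := Nat.add_comm _ _
    | succ n =>
      rw [Walk.getVert_cons_succ, Walk.length_cons, Nat.succ_sub_succ]
      exact ih n

/-- On a shortest walk, the `i`-th vertex is at distance `i` from the start. -/
lemma dist_getVert_shortest (hc : G.Connected) {u v : V} (p : G.Walk u v)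
    (hp : p.length = G.dist u v) {i : ℕ} (hi : i ≤ p.length) :
    G.dist u (p.getVert i) = i := by
  have h1 := walk_dist_getVert_le hc p i
  have h2 := walk_dist_getVert_ge hc p i
  have h3 : G.dist u v ≤ G.dist u (p.getVert i) + G.dist (p.getVert i) v := hc.dist_triangle
  omega

end SimpleGraph

namespace DRG
variable (Γ : DRG)

lemma a0 : Γ.a 0 = 0 := by
  obtain ⟨x⟩ := Γ.conn.nonempty
  have h := Γ.count_a 0 (Nat.zero_le _) x x SimpleGraph.dist_self
  rw [← h]
  convert Set.ncard_empty Γ.X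
  ext z
  simp only [Set.mem_setOf_eq, Set.mem_empty_iff_false, iff_false]
  rintro ⟨hadj, hdist⟩
  exact Γ.G.irrefl ((Γ.conn.dist_eq_zero_iff.1 hdist) ▸ hadj)

lemma exists_dist_pair {i : ℕ} (hi : i ≤ Γ.d) : ∃ x y : Γ.X, Γ.G.dist x y = i := by
  obtain ⟨x, y, hxy⟩ := Γ.dist_eq
  obtain ⟨p, hp⟩ := Γ.conn.exists_walk_length_eq_dist x y
  exact ⟨x, p.getVert i,
    SimpleGraph.dist_getVert_shortest Γ.conn p hp (by rw [hp, hxy]; exact hi)⟩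

lemma c_pos {n : ℕ} (h1 : 1 ≤ n) (hn : n ≤ Γ.d) : 1 ≤ Γ.c n := by
  obtain ⟨x, y, hxy⟩ := Γ.dist_eq
  obtain ⟨p, hp⟩ := Γ.conn.exists_walk_length_eq_dist x y
  have hlen : p.length = Γ.d := by rw [hp, hxy]
  have hdy : Γ.G.dist x (p.getVert n) = n :=
    SimpleGraph.dist_getVert_shortest Γ.conn p hp (by omega)
  have hdz : Γ.G.dist x (p.getVert (n-1)) = n - 1 :=
    SimpleGraph.dist_getVert_shortest Γ.conn p hp (by omega)
  have hadj : Γ.G.Adj (p.getVert (n-1)) (p.getVert n) := by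
    have := p.adj_getVert_succ (i := n - 1) (by omega)
    rwa [Nat.sub_add_cancel h1] at this
  have hcount := Γ.count_c n hn x (p.getVert n) hdy
  rw [← hcount]
  have hmem : (p.getVert (n-1)) ∈ {z : Γ.X | Γ.G.Adj (p.getVert n) z ∧ Γ.G.dist x z = n - 1} :=
    ⟨hadj.symm, hdz⟩
  exact Set.ncard_pos (Set.toFinite _) |>.2 ⟨_, hmem⟩

lemma b_pos {n : ℕ} (hn : n < Γ.d) : 1 ≤ Γ.b n := by
  obtain ⟨x, y, hxy⟩ := Γ.dist_eq
  obtain ⟨p, hp⟩ := Γ.conn.exists_walk_length_eq_dist x y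
  have hlen : p.length = Γ.d := by rw [hp, hxy]
  have hdy : Γ.G.dist x (p.getVert n) = n :=
    SimpleGraph.dist_getVert_shortest Γ.conn p hp (by omega)
  have hdz : Γ.G.dist x (p.getVert (n+1)) = n + 1 :=
    SimpleGraph.dist_getVert_shortest Γ.conn p hp (by omega)
  have hadj : Γ.G.Adj (p.getVert n) (p.getVert (n+1)) := p.adj_getVert_succ (by omega)
  have hcount := Γ.count_b n (le_of_lt hn) x (p.getVert n) hdy
  rw [← hcount]
  exact Set.ncard_pos (Set.toFinite _) |>.2 ⟨_, ⟨hadj, hdz⟩⟩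

lemma c1 (h : 1 ≤ Γ.d) : Γ.c 1 = 1 := by
  obtain ⟨x, y, hxy⟩ := Γ.exists_dist_pair h
  have hadj : Γ.G.Adj x y := SimpleGraph.dist_eq_one_iff_adj.1 hxy
  have hcount := Γ.count_c 1 h x y hxy
  rw [← hcount]
  have hset : {z : Γ.X | Γ.G.Adj y z ∧ Γ.G.dist x z = 1 - 1} = {x} := by
    ext z
    simp only [Set.mem_setOf_eq, Set.mem_singleton_iff]
    constructor
    · rintro ⟨_, hz⟩
      exact ((Γ.conn.dist_eq_zero_iff.1 hz)).symm
    · rintro rfl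
      exact ⟨hadj.symm, SimpleGraph.dist_self⟩
  rw [hset, Set.ncard_singleton]

lemma k_eq {n : ℕ} (h1 : 1 ≤ n) (hn : n ≤ Γ.d) :
    Γ.b 0 = Γ.c n + Γ.a n + Γ.b n := by
  obtain ⟨x, y, hxy⟩ := Γ.exists_dist_pair hn
  have hk := Γ.count_b 0 (Nat.zero_le _) y y SimpleGraph.dist_self
  have hsetk : {z : Γ.X | Γ.G.Adj y z ∧ Γ.G.dist y z = 0 + 1} =
      {z : Γ.X | Γ.G.Adj y z ∧ Γ.G.dist x z = n - 1} ∪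
      ({z : Γ.X | Γ.G.Adj y z ∧ Γ.G.dist x z = n} ∪
       {z : Γ.X | Γ.G.Adj y z ∧ Γ.G.dist x z = n + 1}) := by
    ext z
    simp only [Set.mem_setOf_eq, Set.mem_union]
    constructor
    · rintro ⟨hadj, -⟩
      have hzy : Γ.G.dist z y = 1 := SimpleGraph.dist_eq_one_iff_adj.2 hadj.symm
      have hyz : Γ.G.dist y z = 1 := SimpleGraph.dist_eq_one_iff_adj.2 hadj
      have hub : Γ.G.dist x z ≤ n + 1 := by
        have := Γ.conn.dist_triangle (u := x) (v := y) (w := z)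
        omega
      have hlb : n ≤ Γ.G.dist x z + 1 := by
        have h1 := Γ.conn.dist_triangle (u := x) (v := z) (w := y)
        have h2 : Γ.G.dist z y = 1 := hzy
        omega
      have hcase : Γ.G.dist x z = n - 1 ∨ Γ.G.dist x z = n ∨ Γ.G.dist x z = n + 1 := by omega
      rcases hcase with h | h | h
      · exact Or.inl ⟨hadj, h⟩
      · exact Or.inr (Or.inl ⟨hadj, h⟩)
      · exact Or.inr (Or.inr ⟨hadj, h⟩)
    · rintro (⟨hadj, -⟩ | ⟨hadj, -⟩ | ⟨hadj, -⟩) <;>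
        exact ⟨hadj, SimpleGraph.dist_eq_one_iff_adj.2 hadj⟩
  have hd1 : Disjoint {z : Γ.X | Γ.G.Adj y z ∧ Γ.G.dist x z = n - 1}
      ({z : Γ.X | Γ.G.Adj y z ∧ Γ.G.dist x z = n} ∪
       {z : Γ.X | Γ.G.Adj y z ∧ Γ.G.dist x z = n + 1}) := by
    rw [Set.disjoint_left]
    rintro z ⟨-, hz1⟩ (⟨-, hz2⟩ | ⟨-, hz2⟩) <;> omega
  have hd2 : Disjoint {z : Γ.X | Γ.G.Adj y z ∧ Γ.G.dist x z = n}
      {z : Γ.X | Γ.G.Adj y z ∧ Γ.G.dist x z = n + 1} := by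
    rw [Set.disjoint_left]
    rintro z ⟨-, hz1⟩ ⟨-, hz2⟩; omega
  rw [← hk, hsetk, Set.ncard_union_eq hd1 (Set.toFinite _) (Set.toFinite _),
    Set.ncard_union_eq hd2 (Set.toFinite _) (Set.toFinite _),
    Γ.count_c n hn x y hxy, Γ.count_a n hn x y hxy, Γ.count_b n hn x y hxy]
  ring

lemma k_pos (h : 1 ≤ Γ.d) : 1 ≤ Γ.b 0 := by
  have h1 := Γ.k_eq (le_refl 1) h
  have h2 := Γ.c_pos (le_refl 1) h
  omega

lemma abs_t_le {t : ℝ} (hpsd : Γ.piMem t) (hd : 1 ≤ Γ.d) : |t| ≤ 1 := by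
  obtain ⟨x, y, hxy⟩ := Γ.exists_dist_pair hd
  have hxx : Γ.G.dist x x = 0 := SimpleGraph.dist_self
  have hyy : Γ.G.dist y y = 0 := SimpleGraph.dist_self
  have hyx : Γ.G.dist y x = 1 := by rw [SimpleGraph.dist_comm]; exact hxy
  have key : ∀ r : ℝ, 0 ≤ 1 + t * r + (r * (t + r)) := by
    intro r
    have hq := hpsd.dotProduct_mulVec_nonneg (Pi.single x (1:ℝ) + Pi.single y r)
    rw [star_trivial] at hq
    rw [Matrix.mulVec_add, Matrix.mulVec_single, Matrix.mulVec_single,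
      add_dotProduct, single_dotProduct, single_dotProduct] at hq
    simp only [Pi.add_apply, Pi.smul_apply, MulOpposite.smul_eq_mul_unop, MulOpposite.unop_op,
      Matrix.col_apply] at hq
    have e1 : Γ.Kmat t x x = 1 := by simp [DRG.Kmat, hxx]
    have e2 : Γ.Kmat t x y = t := by simp [DRG.Kmat, hxy]
    have e3 : Γ.Kmat t y x = t := by simp [DRG.Kmat, hyx]
    have e4 : Γ.Kmat t y y = 1 := by simp [DRG.Kmat, hyy]
    rw [e1, e2, e3, e4] at hq
    calc (0:ℝ) ≤ _ := hq
      _ = 1 + t * r + (r * (t + r)) := by ring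
  have k1 := key 1
  have k2 := key (-1)
  rw [abs_le]; constructor <;> nlinarith

end DRG

/-- Pure algebra: uniqueness of the admissible root. -/
lemma DRGaux_alg_unique {w1 a1 δ τ1 τ2 : ℝ} (hω : 0 < w1) (hδ : 0 ≤ δ)
    (h1 : w1 * (1 - τ1^2) - a1 * (1 - τ1) * δ = 1)
    (h2 : w1 * (1 - τ2^2) - a1 * (1 - τ2) * δ = 1)
    (hs1 : τ1 ≠ 0 → a1 * τ1 < 0) (hs2 : τ2 ≠ 0 → a1 * τ2 < 0) : τ1 = τ2 := by
  by_contra hne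
  have h3 : (τ2 - τ1) * (w1 * (τ2 + τ1) - a1 * δ) = 0 := by linear_combination h1 - h2
  have h4 : a1 * δ = w1 * (τ1 + τ2) := by
    rcases mul_eq_zero.1 h3 with h | h
    · exact absurd (sub_eq_zero.1 h).symm hne
    · linarith [sub_eq_zero.1 h]
  have h7 : 0 ≤ a1 * a1 * δ := mul_nonneg (mul_self_nonneg a1) hδ
  rcases eq_or_ne τ1 0 with rfl | h10
  · rcases eq_or_ne τ2 0 with rfl | h20
    · exact hne rfl
    · have l2 := hs2 h20
      have h5 : a1 * a1 * δ = w1 * (a1 * τ2) := by linear_combination a1 * h4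
      have h6 : w1 * (a1 * τ2) < 0 := mul_neg_of_pos_of_neg hω l2
      linarith
  · rcases eq_or_ne τ2 0 with rfl | h20
    · have l1 := hs1 h10
      have h5 : a1 * a1 * δ = w1 * (a1 * τ1) := by linear_combination a1 * h4
      have h6 : w1 * (a1 * τ1) < 0 := mul_neg_of_pos_of_neg hω l1
      linarith
    · have l1 := hs1 h10
      have l2 := hs2 h20
      have h5 : a1 * a1 * δ = w1 * (a1 * τ1 + a1 * τ2) := by linear_combination a1 * h4
      have h6 : w1 * (a1 * τ1 + a1 * τ2) < 0 := mul_neg_of_pos_of_neg hω (by linarith)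
      linarith

section NetAux

variable {Λ : Type*} [Preorder Λ] [IsDirected Λ (· ≤ ·)] [Nonempty Λ]

lemma kiProd_succ (Γ : Λ → DRG) (j : ℕ) (l : Λ) :
    kiProd Γ (j+1) l = kiProd Γ j l * (((Γ l).b j : ℝ) / ((Γ l).c (j + 1) : ℝ)) := by
  unfold kiProd
  rw [Finset.prod_range_succ, Finset.prod_range_succ, div_mul_div_comm]

lemma kiProd_nonneg (Γ : Λ → DRG) (j : ℕ) (l : Λ) : 0 ≤ kiProd Γ j l := by
  unfold kiProd
  apply div_nonneg <;> exact Finset.prod_nonneg (fun _ _ => by positivity)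

/-- The exact three-term recurrence among the `γ̄`'s. -/
lemma recur_id (Γ : Λ → DRG) (t : Λ → ℝ) (hvar : ∀ l : Λ, 0 < sig2 Γ t l)
    (n : ℕ) (l : Λ) (hdl : n + 2 ≤ (Γ l).d) :
    gammaBar Γ t (n+2) l * Real.sqrt (omegaBar Γ t (n+2) l)
      = -((1 - t l) * alphaBar Γ t 1 l + t l * alphaBar Γ t (n+2) l) * gammaBar Γ t (n+1) l
        - t l ^ 2 * Real.sqrt (omegaBar Γ t (n+1) l) * gammaBar Γ t n l := by
  have hs0 : 0 < Real.sqrt (sig2 Γ t l) := Real.sqrt_pos.2 (hvar l)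
  set s : ℝ := Real.sqrt (sig2 Γ t l) with hsdef
  have hs2 : s ^ 2 = sig2 Γ t l := Real.sq_sqrt (hvar l).le
  have ha0 : ((Γ l).a 0 : ℝ) = 0 := by rw [(Γ l).a0]; norm_num
  set A : ℝ := ((Γ l).a (n+1) : ℝ) with hAdef
  set B : ℝ := ((Γ l).b (n+1) : ℝ) with hBdef
  set C : ℝ := ((Γ l).c (n+1) : ℝ) with hCdef
  set C' : ℝ := ((Γ l).c (n+2) : ℝ) with hC'def
  set kb : ℝ := ((Γ l).b 0 : ℝ) with hkbdef
  have hC : 0 < C := by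
    rw [hCdef]
    exact_mod_cast Nat.lt_of_lt_of_le Nat.zero_lt_one ((Γ l).c_pos (by omega) (by omega))
  have hC' : 0 < C' := by
    rw [hC'def]
    exact_mod_cast Nat.lt_of_lt_of_le Nat.zero_lt_one ((Γ l).c_pos (by omega) (by omega))
  have hBnn : 0 ≤ B := by rw [hBdef]; positivity
  have hsum : kb = C + A + B := by
    rw [hkbdef, hCdef, hAdef, hBdef]
    exact_mod_cast (Γ l).k_eq (n := n+1) (by omega) (by omega)
  have hK1nn := kiProd_nonneg Γ (n+1) l
  have hKnn := kiProd_nonneg Γ n l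
  have hOnn : ∀ m : ℕ, 0 ≤ omegaBar Γ t m l := fun m =>
    div_nonneg (by positivity) (hvar l).le
  have hC0 : C ≠ 0 := hC.ne'
  have hC'0 : C' ≠ 0 := hC'.ne'
  have hsig0 : sig2 Γ t l ≠ 0 := (hvar l).ne'
  have hsne : s ≠ 0 := hs0.ne' 
  -- coefficient identity
  have hcoef : -((1 - t l) * alphaBar Γ t 1 l + t l * alphaBar Γ t (n+2) l)
      = t l * (B + C) / s := by
    show -((1 - t l) * ((((Γ l).a 0 : ℝ) - t l * kb) / s)
        + t l * ((A - t l * kb) / s)) = t l * (B + C) / s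
    rw [ha0, hsum]
    field_simp
    ring
  -- left radicand
  have hrad1 : kiProd Γ (n+2) l * omegaBar Γ t (n+2) l
      = (kiProd Γ (n+1) l * B ^ 2) / s ^ 2 := by
    rw [kiProd_succ, hs2]
    show kiProd Γ (n+1) l * (B / C') * ((C' * B) / sig2 Γ t l) = _
    field_simp
  -- right radicand
  have hrad2 : omegaBar Γ t (n+1) l * kiProd Γ n l
      = C ^ 2 * kiProd Γ (n+1) l / s ^ 2 := by
    rw [hs2, kiProd_succ Γ n l]
    show (C * ((Γ l).b n : ℝ)) / sig2 Γ t l * kiProd Γ n l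
        = C ^ 2 * (kiProd Γ n l * (((Γ l).b n : ℝ) / C)) / sig2 Γ t l
    field_simp
  have hsqrt1 : Real.sqrt (kiProd Γ (n+2) l) * Real.sqrt (omegaBar Γ t (n+2) l)
      = Real.sqrt (kiProd Γ (n+1) l) * B / s := by
    rw [← Real.sqrt_mul (kiProd_nonneg Γ (n+2) l), hrad1, Real.sqrt_div (by positivity),
      Real.sqrt_sq hs0.le, Real.sqrt_mul hK1nn, Real.sqrt_sq hBnn]
  have hsqrt2 : Real.sqrt (omegaBar Γ t (n+1) l) * Real.sqrt (kiProd Γ n l)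
      = C * Real.sqrt (kiProd Γ (n+1) l) / s := by
    rw [← Real.sqrt_mul (hOnn (n+1)), hrad2, Real.sqrt_div (by positivity),
      Real.sqrt_sq hs0.le, Real.sqrt_mul (by positivity : (0:ℝ) ≤ C ^ 2),
      Real.sqrt_sq hC.le]
  have LHS' : gammaBar Γ t (n+2) l * Real.sqrt (omegaBar Γ t (n+2) l)
      = t l ^ (n+2) * (Real.sqrt (kiProd Γ (n+1) l) * B / s) := by
    show t l ^ (n+2) * Real.sqrt (kiProd Γ (n+2) l) * Real.sqrt (omegaBar Γ t (n+2) l) = _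
    rw [mul_assoc, hsqrt1]
  have RHS2' : t l ^ 2 * Real.sqrt (omegaBar Γ t (n+1) l) * gammaBar Γ t n l
      = t l ^ 2 * t l ^ n * (C * Real.sqrt (kiProd Γ (n+1) l) / s) := by
    show t l ^ 2 * Real.sqrt (omegaBar Γ t (n+1) l) * (t l ^ n * Real.sqrt (kiProd Γ n l)) = _
    rw [← hsqrt2]
    ring
  rw [LHS', hcoef, RHS2']
  show _ = t l * (B + C) / s * (t l ^ (n+1) * Real.sqrt (kiProd Γ (n+1) l)) - _
  field_simp
  ring

end NetAux


/-- If the limits `ω_i > 0` and `α_i` exist for all `i ≥ 1`, then the limits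
`γ_i = lim t^i √(k_i)` exist as well. -/
theorem stmt6 {Λ : Type*} [Preorder Λ] [IsDirected Λ (· ≤ ·)] [Nonempty Λ] [Infinite Λ]
    (Γ : Λ → DRG) (t : Λ → ℝ)
    (hpi : ∀ l : Λ, (Γ l).piMem (t l))
    (hvar : ∀ l : Λ, 0 < sig2 Γ t l)
    (hd : Tendsto (fun l : Λ => (Γ l).d) atTop atTop)
    (ω αl : ℕ → ℝ) (hDR : AssumptionDR Γ t ω αl) :
    ∀ i : ℕ, ∃ γ : ℝ, Tendsto (gammaBar Γ t i) atTop (nhds γ) := by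
  classical
  obtain ⟨hω1pos, hω1, hα1⟩ := hDR 1 le_rfl
  obtain ⟨hω2pos, hω2, hα2⟩ := hDR 2 (by norm_num)
  set s : Λ → ℝ := fun l => Real.sqrt (sig2 Γ t l) with hsdef
  have hs0 : ∀ l, 0 < s l := fun l => Real.sqrt_pos.2 (hvar l)
  have hs2 : ∀ l, s l ^ 2 = sig2 Γ t l := fun l => Real.sq_sqrt (hvar l).le
  have ha0 : ∀ l, ((Γ l).a 0 : ℝ) = 0 := fun l => by rw [(Γ l).a0]; norm_num
  have hev : ∀ n : ℕ, ∀ᶠ l in (atTop : Filter Λ), n ≤ (Γ l).d := fun n =>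
    hd.eventually (eventually_ge_atTop n)
  have halpha1 : ∀ l, alphaBar Γ t 1 l = (0 - t l * ((Γ l).b 0 : ℝ)) / s l := fun l => by
    show (((Γ l).a 0 : ℝ) - t l * ((Γ l).b 0 : ℝ)) / s l = _
    rw [ha0 l]
  have halpha2 : ∀ l, alphaBar Γ t 2 l = (((Γ l).a 1 : ℝ) - t l * ((Γ l).b 0 : ℝ)) / s l :=
    fun l => rfl
  have hdelta_nonneg : ∀ l, 0 ≤ alphaBar Γ t 2 l - alphaBar Γ t 1 l := fun l => by
    rw [halpha1 l, halpha2 l, div_sub_div_same]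
    have e : (((Γ l).a 1 : ℝ) - t l * ((Γ l).b 0:ℝ)) - (0 - t l * ((Γ l).b 0:ℝ))
        = ((Γ l).a 1 : ℝ) := by ring
    rw [e]
    positivity
  have hδ : 0 ≤ αl 2 - αl 1 :=
    le_of_tendsto_of_tendsto' tendsto_const_nhds (hα2.sub hα1) hdelta_nonneg
  set w : Λ → ℝ := fun l => ((Γ l).b 0 : ℝ) / s l ^ 2 with hwdef
  have hw_eq : ∀ᶠ l in (atTop : Filter Λ), omegaBar Γ t 1 l = w l := by
    filter_upwards [hev 1] with l hl
    show (((Γ l).c 1 : ℝ) * ((Γ l).b (1-1) : ℝ)) / sig2 Γ t l = ((Γ l).b 0 : ℝ) / s l ^ 2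
    have hc1 : ((Γ l).c 1 : ℝ) = 1 := by exact_mod_cast (Γ l).c1 hl
    rw [hc1, one_mul, hs2 l]
  have hw : Tendsto w atTop (nhds (ω 1)) := hω1.congr' hw_eq
  have hquad : ∀ l, w l * (1 - t l ^ 2)
      - alphaBar Γ t 1 l * (1 - t l) * (alphaBar Γ t 2 l - alphaBar Γ t 1 l) = 1 := fun l => by
    rw [halpha1 l, halpha2 l]
    show ((Γ l).b 0 : ℝ) / s l ^ 2 * (1 - t l ^ 2) - _ = 1
    have hsne : s l ≠ 0 := (hs0 l).ne'
    have hsig : s l ^ 2 = ((Γ l).b 0 : ℝ) * (1 - t l) * (1 + t l + t l * ((Γ l).a 1 : ℝ)) :=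
      hs2 l
    have e1 : ((Γ l).b 0:ℝ) / s l ^ 2 * (1 - t l ^ 2)
        - ((0 - t l * ((Γ l).b 0:ℝ)) / s l) * (1 - t l)
          * ((((Γ l).a 1:ℝ) - t l * ((Γ l).b 0:ℝ)) / s l - (0 - t l * ((Γ l).b 0:ℝ)) / s l)
        = (((Γ l).b 0:ℝ) * (1 - t l ^ 2)
            + t l * ((Γ l).b 0:ℝ) * (1 - t l) * ((Γ l).a 1:ℝ)) / s l ^ 2 := by
      ring
    have e2 : ((Γ l).b 0:ℝ) * (1 - t l ^ 2)
        + t l * ((Γ l).b 0:ℝ) * (1 - t l) * ((Γ l).a 1:ℝ) = s l ^ 2 := by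
      linear_combination -hsig
    exact e1.trans (by rw [e2, div_self (pow_ne_zero 2 hsne)])
  have hbound : ∀ᶠ l in (atTop : Filter Λ), |t l| ≤ 1 := by
    filter_upwards [hev 1] with l hl
    exact (Γ l).abs_t_le (hpi l) hl
  have hkk1 : ∀ᶠ l in (atTop : Filter Λ), (1:ℝ) ≤ ((Γ l).b 0 : ℝ) := by
    filter_upwards [hev 1] with l hl
    exact_mod_cast (Γ l).k_pos hl
  have compactlim : ∀ U : Ultrafilter Λ, (U : Filter Λ) ≤ atTop →
      ∃ τ : ℝ, Tendsto t (U : Filter Λ) (nhds τ) := by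
    intro U hU
    have h1 : (Ultrafilter.map t U : Filter ℝ) ≤ Filter.principal (Set.Icc (-1:ℝ) 1) := by
      rw [Ultrafilter.coe_map, le_principal_iff, mem_map]
      have h2 : ∀ᶠ l in (atTop : Filter Λ), t l ∈ Set.Icc (-1:ℝ) 1 := by
        filter_upwards [hbound] with l hl
        exact ⟨(abs_le.1 hl).1, (abs_le.1 hl).2⟩
      exact hU h2
    obtain ⟨τ, -, hτ⟩ := isCompact_Icc.ultrafilter_le_nhds (Ultrafilter.map t U) h1
    exact ⟨τ, by rwa [Ultrafilter.coe_map] at hτ⟩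
  have cluster : ∀ (U : Ultrafilter Λ), (U : Filter Λ) ≤ atTop → ∀ τ : ℝ,
      Tendsto t (U : Filter Λ) (nhds τ) →
      (ω 1 * (1 - τ^2) - αl 1 * (1 - τ) * (αl 2 - αl 1) = 1 ∧
        (τ ≠ 0 → αl 1 * τ < 0)) := by
    intro U hU τ htU
    have hwU := hw.mono_left hU
    have hα1U := hα1.mono_left hU
    have hα2U := hα2.mono_left hU
    constructor
    · have hL : Tendsto (fun l => w l * (1 - t l ^ 2)
          - alphaBar Γ t 1 l * (1 - t l) * (alphaBar Γ t 2 l - alphaBar Γ t 1 l)) (U : Filter Λ)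
          (nhds (ω 1 * (1 - τ^2) - αl 1 * (1 - τ) * (αl 2 - αl 1))) :=
        (hwU.mul (tendsto_const_nhds.sub (htU.pow 2))).sub
          ((hα1U.mul (tendsto_const_nhds.sub htU)).mul (hα2U.sub hα1U))
      have hL' : Tendsto (fun _ : Λ => (1:ℝ)) (U : Filter Λ)
          (nhds (ω 1 * (1 - τ^2) - αl 1 * (1 - τ) * (αl 2 - αl 1))) :=
        hL.congr hquad
      exact tendsto_nhds_unique hL' tendsto_const_nhds
    · intro hτ0
      set u : Λ → ℝ := fun l => ((Γ l).b 0 : ℝ) / s l with hudef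
      have htu : ∀ l, t l * u l = - alphaBar Γ t 1 l := fun l => by
        rw [halpha1 l]
        show t l * (((Γ l).b 0 : ℝ) / s l) = _
        have hsne : s l ≠ 0 := (hs0 l).ne'
        field_simp
        ring
      have htuU : Tendsto (fun l => t l * u l) (U : Filter Λ) (nhds (- αl 1)) :=
        (hα1U.neg).congr (fun l => (htu l).symm)
      have htne : ∀ᶠ l in (U : Filter Λ), t l ≠ 0 := htU.eventually_ne hτ0
      have heqU : (fun l => t l * u l / t l) =ᶠ[(U : Filter Λ)] u := by
        filter_upwards [htne] with l hl
        rw [mul_comm, mul_div_assoc, div_self hl, mul_one]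
      have huU : Tendsto u (U : Filter Λ) (nhds (- αl 1 / τ)) :=
        Filter.Tendsto.congr' heqU (htuU.div htU hτ0)
      have hunn : 0 ≤ - αl 1 / τ :=
        ge_of_tendsto huU (Eventually.of_forall fun l => by
          have : (0:ℝ) ≤ ((Γ l).b 0 : ℝ) / s l := div_nonneg (by positivity) (hs0 l).le
          exact this)
      have hle : ∀ᶠ l in (U : Filter Λ), w l ≤ u l ^ 2 := by
        filter_upwards [hU hkk1] with l hl
        show ((Γ l).b 0 : ℝ) / s l ^ 2 ≤ (((Γ l).b 0 : ℝ) / s l) ^ 2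
        rw [div_pow]
        have h2 : ((Γ l).b 0 : ℝ) ≤ ((Γ l).b 0 : ℝ) ^ 2 := by nlinarith
        exact div_le_div_of_nonneg_right h2 (pow_pos (hs0 l) 2).le
      have hω1le : ω 1 ≤ (- αl 1 / τ)^2 :=
        le_of_tendsto_of_tendsto hwU (huU.pow 2) hle
      have hμpos : 0 < - αl 1 / τ := by
        rcases hunn.lt_or_eq with h | h
        · exact h
        · exfalso
          rw [← h] at hω1le
          simp at hω1le
          nlinarith
      have hτsq : 0 < τ^2 := by positivity
      have hgoal : αl 1 * τ = -((- αl 1 / τ) * τ^2) := by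
        field_simp
      rw [hgoal]
      exact neg_lt_zero.mpr (mul_pos hμpos hτsq)
  obtain ⟨U0, hU0⟩ := Ultrafilter.exists_le (atTop : Filter Λ)
  obtain ⟨τ, hτ0U⟩ := compactlim U0 hU0
  have hfacts0 := cluster U0 hU0 τ hτ0U
  have ht : Tendsto t atTop (nhds τ) := by
    rw [Filter.tendsto_iff_ultrafilter]
    intro U hU
    obtain ⟨τ', hτ'⟩ := compactlim U hU
    have hfacts := cluster U hU τ' hτ'
    have heq : τ' = τ :=
      DRGaux_alg_unique hω1pos hδ hfacts.1 hfacts0.1 hfacts.2 hfacts0.2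
    rwa [heq] at hτ'
  -- limits of the γ̄'s by induction using the recurrence
  have hγ0 : Tendsto (gammaBar Γ t 0) atTop (nhds 1) := by
    have he : ∀ l, gammaBar Γ t 0 l = 1 := fun l => by
      show t l ^ 0 * Real.sqrt (kiProd Γ 0 l) = 1
      have : kiProd Γ 0 l = 1 := by
        show (∏ h ∈ Finset.range 0, ((Γ l).b h : ℝ)) /
            (∏ h ∈ Finset.range 0, ((Γ l).c (h+1) : ℝ)) = 1
        simp
      rw [pow_zero, one_mul, this, Real.sqrt_one]
    exact tendsto_const_nhds.congr (fun l => (he l).symm)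
  have hγ1 : Tendsto (gammaBar Γ t 1) atTop (nhds (- αl 1 / Real.sqrt (ω 1))) := by
    have hident : ∀ᶠ l in (atTop : Filter Λ),
        - alphaBar Γ t 1 l / Real.sqrt (omegaBar Γ t 1 l) = gammaBar Γ t 1 l := by
      filter_upwards [hev 1] with l hl
      have hc1 : ((Γ l).c 1 : ℝ) = 1 := by exact_mod_cast (Γ l).c1 hl
      have hk1 : (1:ℝ) ≤ ((Γ l).b 0 : ℝ) := by exact_mod_cast (Γ l).k_pos hl
      have hkpos : (0:ℝ) < ((Γ l).b 0 : ℝ) := by linarith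
      show _ = t l ^ 1 * Real.sqrt (kiProd Γ 1 l)
      have e1 : kiProd Γ 1 l = ((Γ l).b 0 : ℝ) := by
        show (∏ h ∈ Finset.range 1, ((Γ l).b h : ℝ)) /
            (∏ h ∈ Finset.range 1, ((Γ l).c (h+1) : ℝ)) = _
        rw [Finset.prod_range_one, Finset.prod_range_one, hc1, div_one]
      have e2 : omegaBar Γ t 1 l = ((Γ l).b 0 : ℝ) / s l ^ 2 := by
        show (((Γ l).c 1 : ℝ) * ((Γ l).b (1-1) : ℝ)) / sig2 Γ t l = _
        rw [hc1, one_mul, hs2 l]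
      rw [e1, e2, halpha1 l, pow_one,
        Real.sqrt_div (by positivity) (s l ^ 2), Real.sqrt_sq (hs0 l).le]
      have hsne : s l ≠ 0 := (hs0 l).ne'
      have hsqne : Real.sqrt ((Γ l).b 0 : ℝ) ≠ 0 := (Real.sqrt_pos.2 hkpos).ne'
      have hsqne2 : Real.sqrt ((Γ l).b 0:ℝ) ≠ 0 := (Real.sqrt_pos.2 hkpos).ne'
      have hk2 : Real.sqrt ((Γ l).b 0 : ℝ) ^ 2 = ((Γ l).b 0 : ℝ) :=
        Real.sq_sqrt hkpos.le
      field_simp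
      linear_combination (-(t l)) * hk2
    have hlim : Tendsto (fun l => - alphaBar Γ t 1 l / Real.sqrt (omegaBar Γ t 1 l)) atTop
        (nhds (- αl 1 / Real.sqrt (ω 1))) :=
      (hα1.neg).div hω1.sqrt (Real.sqrt_pos.2 hω1pos).ne'
    exact hlim.congr' hident
  have main : ∀ n : ℕ, (∃ γ : ℝ, Tendsto (gammaBar Γ t n) atTop (nhds γ)) ∧
      (∃ γ : ℝ, Tendsto (gammaBar Γ t (n+1)) atTop (nhds γ)) := by
    intro n
    induction n with
    | zero => exact ⟨⟨1, hγ0⟩, ⟨_, hγ1⟩⟩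
    | succ n ih =>
      refine ⟨ih.2, ?_⟩
      obtain ⟨γa, hγa⟩ := ih.1
      obtain ⟨γb, hγb⟩ := ih.2
      obtain ⟨hωpos1, hωn1, hαn1⟩ := hDR (n+1) (by omega)
      obtain ⟨hωpos2, hωn2, hαn2⟩ := hDR (n+2) (by omega)
      refine ⟨(-((1 - τ) * αl 1 + τ * αl (n+2)) * γb
          - τ^2 * Real.sqrt (ω (n+1)) * γa) / Real.sqrt (ω (n+2)), ?_⟩
      have hnum : Tendsto (fun l => -((1 - t l) * alphaBar Γ t 1 l
            + t l * alphaBar Γ t (n+2) l) * gammaBar Γ t (n+1) l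
            - t l ^ 2 * Real.sqrt (omegaBar Γ t (n+1) l) * gammaBar Γ t n l) atTop
          (nhds (-((1 - τ) * αl 1 + τ * αl (n+2)) * γb
            - τ^2 * Real.sqrt (ω (n+1)) * γa)) :=
        ((((tendsto_const_nhds.sub ht).mul hα1).add (ht.mul hαn2)).neg.mul hγb).sub
          (((ht.pow 2).mul hωn1.sqrt).mul hγa)
      have hden : Tendsto (fun l => Real.sqrt (omegaBar Γ t (n+2) l)) atTop
          (nhds (Real.sqrt (ω (n+2)))) := hωn2.sqrt
      have hlim := hnum.div hden (Real.sqrt_pos.2 hωpos2).ne'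
      apply hlim.congr'
      have hpos_ev : ∀ᶠ l in (atTop : Filter Λ), 0 < omegaBar Γ t (n+2) l :=
        hωn2.eventually (eventually_gt_nhds hωpos2)
      filter_upwards [hev (n+2), hpos_ev] with l hl hwpos
      simp only [Pi.div_apply]
      have hrec := recur_id Γ t hvar n l hl
      have hsq : Real.sqrt (omegaBar Γ t (n+2) l) ≠ 0 := (Real.sqrt_pos.2 hwpos).ne'
      rw [← hrec, mul_div_assoc, div_self hsq, mul_one]
  exact fun i => (main i).1
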